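/- Let σ be a twistor section of a Dirac bundle S over a riemannian n-manifold with n > 2. Then for every tangent vector X, ∇_X Dσ = (n/(n−2))[ (1/(n−1)) X·Rσ − (1/2) Ric_X σ ], where Ric_X σ = 2 Σᵢ eᵢ·R(eᵢ,X)σ. -/

import Mathlib

/-- (Theorem B, second part.)  For a twistor section `σ` of a Dirac
bundle over a riemannian `n`-manifold with `n > 2`, and every vector field `X`,
`∇_X Dσ = (n/(n−2)) [ (1/(n−1)) X·Rσ − (1/2) Ric_X σ ]`, where
`Ric_X σ = 2 Σᵢ eᵢ·R(eᵢ,X)σ` is the Ricci curvature operator.  The hypotheses are the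
structure equations in a global orthonormal frame `e` and the context facts valid for
twistor sections: the Clifford frame relations, the anticommutation identity
`Σᵢ eᵢ·X·∇_{eᵢ}τ = −X·Dτ − 2∇_X τ`, the identity `D²σ = (n/(n−1)) Rw σ`, and
`R(X,Y)σ = (1/n)(X·∇_Y Dσ − Y·∇_X Dσ)`. -/
theorem twistor_nabla_D_formula
    {Γ VF : Type*} [AddCommGroup Γ] [Module ℝ Γ] [AddCommGroup VF]
    (n : ℕ) (hn : 2 < n)
    (nabla cl : VF → Γ →ₗ[ℝ] Γ)
    (e : Fin n → VF)
    (hcl_frame : ∀ (i : Fin n) (τ : Γ), cl (e i) (cl (e i) τ) = -τ)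
    (D Rw : Γ →ₗ[ℝ] Γ)
    (hD : ∀ τ, D τ = ∑ i, cl (e i) (nabla (e i) τ))
    (hanti : ∀ (X : VF) (τ : Γ),
      ∑ i, cl (e i) (cl X (nabla (e i) τ)) = - cl X (D τ) - (2 : ℝ) • nabla X τ)
    (lie : VF → VF → VF)
    (Rcurv : VF → VF → Γ →ₗ[ℝ] Γ)
    (hR : ∀ (X Y : VF) (τ : Γ),
      Rcurv X Y τ = nabla X (nabla Y τ) - nabla Y (nabla X τ) - nabla (lie X Y) τ)
    (Ric : VF → Γ →ₗ[ℝ] Γ)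
    (hRic : ∀ (X : VF) (τ : Γ), Ric X τ = (2 : ℝ) • ∑ i, cl (e i) (Rcurv (e i) X τ))
    (σ : Γ)
    (htwistor : ∀ X : VF, nabla X σ + ((n : ℝ)⁻¹) • cl X (D σ) = 0)
    -- context facts for twistor sections
    (hD2 : D (D σ) = ((n : ℝ) / ((n : ℝ) - 1)) • Rw σ)
    (hRtwist : ∀ X Y : VF,
      Rcurv X Y σ = ((n : ℝ)⁻¹) • (cl X (nabla Y (D σ)) - cl Y (nabla X (D σ)))) :
    ∀ X : VF, nabla X (D σ)
      = ((n : ℝ) / ((n : ℝ) - 2)) •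
          ((((n : ℝ) - 1)⁻¹) • cl X (Rw σ) - (2 : ℝ)⁻¹ • Ric X σ) := by
  intro X
  have hn0 : (n:ℝ) ≠ 0 := by positivity
  have hn1 : (n:ℝ) - 1 ≠ 0 := by
    have : (2:ℝ) < n := by exact_mod_cast hn
    linarith
  have hn2 : (n:ℝ) - 2 ≠ 0 := by
    have : (2:ℝ) < n := by exact_mod_cast hn
    linarith
  set A := nabla X (D σ) with hA
  set B := cl X (Rw σ) with hB
  have hsum1 : ∑ i, cl (e i) (cl (e i) A) = -((n:ℝ) • A) := by
    simp [hcl_frame, Finset.sum_const, Finset.card_univ, ← Nat.cast_smul_eq_nsmul ℝ]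
  have hanti' : ∑ i, cl (e i) (cl X (nabla (e i) (D σ))) = - cl X (D (D σ)) - (2:ℝ) • A :=
    hanti X (D σ)
  have hDD : cl X (D (D σ)) = ((n:ℝ)/((n:ℝ)-1)) • B := by
    rw [hD2, map_smul]
  have hRicX : Ric X σ = ((2:ℝ) * (n:ℝ)⁻¹) • ((((2:ℝ)-(n:ℝ)) • A) + ((n:ℝ)/((n:ℝ)-1)) • B) := by
    rw [hRic]
    have : ∀ i : Fin n, cl (e i) (Rcurv (e i) X σ)
        = (n:ℝ)⁻¹ • (cl (e i) (cl (e i) A) - cl (e i) (cl X (nabla (e i) (D σ)))) := by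
      intro i
      rw [hRtwist, map_smul, map_sub]
    rw [Finset.sum_congr rfl (fun i _ => this i), ← Finset.smul_sum, Finset.sum_sub_distrib,
      hsum1, hanti', hDD]
    match_scalars <;> field_simp <;> ring
  rw [hRicX]
  match_scalars <;> field_simp <;> ring
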